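/- arXiv:2505.21259 — 4 statements merged into one kernel-verified Lean document; each statement's English description precedes it below -/
import Mathlib

section
/- Let 0 < r_e < r_s, a_s = r_s − r_e, d_max = √(r_s² − r_e²), and let N be a positive integer. Let Θ_1, …, Θ_N be independent random variables, each uniformly distributed on [−π, π], and set D_k = √(r_e² + r_s² − 2 r_e r_s cos Θ_k). Then for every x with a_s ≤ x ≤ d_max, P(min_{1≤k≤N} D_k ≤ x) = 1 − [1 − (1/π)·arccos(1 − (x² − a_s²)/(2 r_e r_s))]^N, and for x < a_s this probability is 0. -/
open MeasureTheory ProbabilityTheory Real Set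

lemma antitone_arccos' : Antitone Real.arccos := fun a b h => by
  unfold Real.arccos
  have := Real.monotone_arcsin h
  linarith

/-- Contact distance distribution of the S-U link for a binomial point process
of N satellites on the orbit circle. -/
theorem stmt1 {Ω : Type*} [MeasurableSpace Ω] (P : Measure Ω) [IsProbabilityMeasure P]
    (r_e r_s a_s d_max : ℝ) (hre : 0 < r_e) (hrs : r_e < r_s)
    (has : a_s = r_s - r_e) (hdmax : d_max = Real.sqrt (r_s ^ 2 - r_e ^ 2))
    (N : ℕ) (hN : 0 < N)
    (Θ : Fin N → Ω → ℝ) (hmeas : ∀ k, Measurable (Θ k))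
    (hindep : iIndepFun Θ P)
    (hunif : ∀ k, P.map (Θ k) = (ENNReal.ofReal (2 * π))⁻¹ • volume.restrict (Icc (-π) π))
    (D : Fin N → Ω → ℝ)
    (hD : ∀ k ω, D k ω = Real.sqrt (r_e ^ 2 + r_s ^ 2 - 2 * r_e * r_s * Real.cos (Θ k ω))) :
    (∀ x, a_s ≤ x → x ≤ d_max →
      P {ω | (⨅ k, D k ω) ≤ x} =
        ENNReal.ofReal
          (1 - (1 - (1 / π) * Real.arccos (1 - (x ^ 2 - a_s ^ 2) / (2 * r_e * r_s))) ^ N)) ∧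
    (∀ x, x < a_s → P {ω | (⨅ k, D k ω) ≤ x} = 0) := by
  have hπ : 0 < π := Real.pi_pos
  have hrs0 : 0 < r_s := hre.trans hrs
  have has0 : 0 < a_s := by rw [has]; linarith
  haveI : Nonempty (Fin N) := Fin.pos_iff_nonempty.mp hN
  have hDge : ∀ k ω, a_s ≤ D k ω := by
    intro k ω
    rw [hD]
    have hc := Real.cos_le_one (Θ k ω)
    have hprod : 2 * r_e * r_s * Real.cos (Θ k ω) ≤ 2 * r_e * r_s := by
      nlinarith [mul_pos hre hrs0]
    have h1 : a_s ^ 2 ≤ r_e ^ 2 + r_s ^ 2 - 2 * r_e * r_s * Real.cos (Θ k ω) := by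
      rw [has]; nlinarith [hprod]
    calc a_s = Real.sqrt (a_s ^ 2) := (Real.sqrt_sq has0.le).symm
      _ ≤ _ := Real.sqrt_le_sqrt h1
  have hbdd : ∀ ω, BddBelow (Set.range fun k => D k ω) :=
    fun ω => (Set.finite_range _).bddBelow
  constructor
  · intro x hx1 hx2
    set y : ℝ := 1 - (x ^ 2 - a_s ^ 2) / (2 * r_e * r_s) with hy
    have hx0 : 0 < x := has0.trans_le hx1
    have hxsq : x ^ 2 ≤ r_s ^ 2 - r_e ^ 2 := by
      have h := hx2
      rw [hdmax] at h
      exact (Real.le_sqrt hx0.le (by nlinarith)).mp h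
    have hxa : a_s ^ 2 ≤ x ^ 2 := by nlinarith
    have h2rr : 0 < 2 * r_e * r_s := by positivity
    have hy1 : y ≤ 1 := by
      rw [hy]
      have : 0 ≤ (x ^ 2 - a_s ^ 2) / (2 * r_e * r_s) := div_nonneg (by linarith) h2rr.le
      linarith
    have hykey : 2 * r_e * r_s * y = r_e ^ 2 + r_s ^ 2 - x ^ 2 := by
      rw [hy, has]; field_simp; ring
    have hym1 : -1 ≤ y := by nlinarith
    -- set equality per k
    have hA : ∀ k, {ω | D k ω ≤ x} = Θ k ⁻¹' {θ | y ≤ Real.cos θ} := by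
      intro k
      ext ω
      simp only [mem_setOf_eq, mem_preimage, hD]
      rw [Real.sqrt_le_left hx0.le]
      constructor
      · intro h
        have : 2 * r_e * r_s * y ≤ 2 * r_e * r_s * Real.cos (Θ k ω) := by
          rw [hykey]; linarith
        exact le_of_mul_le_mul_left this h2rr
      · intro h
        nlinarith
    -- union equality
    have hUnion : {ω | (⨅ k, D k ω) ≤ x} = ⋃ k, Θ k ⁻¹' {θ | y ≤ Real.cos θ} := by
      ext ω
      simp only [mem_setOf_eq, mem_iUnion]
      constructor
      · intro h
        obtain ⟨k, -, hk⟩ := Finset.exists_min_image Finset.univ (fun k => D k ω)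
          Finset.univ_nonempty
        have hinf : (⨅ k', D k' ω) = D k ω :=
          le_antisymm (ciInf_le (hbdd ω) k) (le_ciInf fun j => hk j (Finset.mem_univ j))
        have hDk : D k ω ≤ x := hinf ▸ h
        exact ⟨k, (Set.ext_iff.mp (hA k) ω).mp hDk⟩
      · rintro ⟨k, hk⟩
        have : D k ω ≤ x := (Set.ext_iff.mp (hA k) ω).mpr hk
        exact le_trans (ciInf_le (hbdd ω) k) this
    have hAmeas : MeasurableSet {θ : ℝ | y ≤ Real.cos θ} :=
      measurableSet_le measurable_const Real.measurable_cos
    -- single probability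
    have hsetIcc : {θ : ℝ | y ≤ Real.cos θ} ∩ Icc (-π) π =
        Icc (-Real.arccos y) (Real.arccos y) := by
      ext θ
      simp only [mem_inter_iff, mem_setOf_eq, mem_Icc]
      constructor
      · rintro ⟨hcos, hθ1, hθ2⟩
        have habs : |θ| ≤ Real.arccos y := by
          have h1 : Real.arccos (Real.cos θ) ≤ Real.arccos y := antitone_arccos' hcos
          have h2 : Real.arccos (Real.cos θ) = |θ| := by
            rcases le_total 0 θ with h | h
            · rw [abs_of_nonneg h, Real.arccos_cos h hθ2]
            · rw [abs_of_nonpos h, ← Real.cos_neg, Real.arccos_cos (by linarith) (by linarith)]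
          rwa [h2] at h1
        exact abs_le.mp habs
      · rintro ⟨hθ1, hθ2⟩
        have hπa : Real.arccos y ≤ π := Real.arccos_le_pi y
        have habs : |θ| ≤ Real.arccos y := abs_le.mpr ⟨hθ1, hθ2⟩
        refine ⟨?_, by linarith [abs_nonneg θ, neg_abs_le θ, le_abs_self θ], by
          linarith [le_abs_self θ]⟩
        have : Real.cos (Real.arccos y) ≤ Real.cos |θ| :=
          Real.cos_le_cos_of_nonneg_of_le_pi (abs_nonneg θ) hπa habs
        rwa [Real.cos_arccos hym1 hy1, Real.cos_abs] at this
    set p : ℝ := Real.arccos y / π with hp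
    have hp0 : 0 ≤ p := div_nonneg (Real.arccos_nonneg y) hπ.le
    have hp1 : p ≤ 1 := by
      rw [hp, div_le_one hπ]; exact Real.arccos_le_pi y
    have hsingle : ∀ k, P (Θ k ⁻¹' {θ : ℝ | y ≤ Real.cos θ}) = ENNReal.ofReal p := by
      intro k
      rw [← Measure.map_apply (hmeas k) hAmeas, hunif k]
      simp only [Measure.smul_apply, Measure.restrict_apply hAmeas, hsetIcc, smul_eq_mul]
      rw [Real.volume_Icc,
        show Real.arccos y - -Real.arccos y = 2 * Real.arccos y by ring,
        ← ENNReal.div_eq_inv_mul, ← ENNReal.ofReal_div_of_pos (by positivity)]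
      congr 1
      rw [hp, mul_div_mul_left _ _ (two_ne_zero)]
    -- complement probabilities
    have hsingle' : ∀ k, P ((Θ k ⁻¹' {θ : ℝ | y ≤ Real.cos θ})ᶜ) = ENNReal.ofReal (1 - p) := by
      intro k
      rw [prob_compl_eq_one_sub ((hmeas k) hAmeas), hsingle k,
        ← ENNReal.ofReal_one, ← ENNReal.ofReal_sub _ hp0]
    -- independence
    have hinter : P (⋂ k, (Θ k ⁻¹' {θ : ℝ | y ≤ Real.cos θ})ᶜ) =
        ENNReal.ofReal ((1 - p) ^ N) := by
      have h := hindep.measure_inter_preimage_eq_mul Finset.univ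
        (sets := fun _ => {θ : ℝ | y ≤ Real.cos θ}ᶜ)
        (fun i _ => hAmeas.compl)
      simp only [Finset.mem_univ, Set.iInter_true, Set.preimage_compl] at h
      rw [h, Finset.prod_congr rfl (fun k _ => hsingle' k), Finset.prod_const,
        Finset.card_univ, Fintype.card_fin, ← ENNReal.ofReal_pow (by linarith)]
    -- finish
    have hcompl : {ω | (⨅ k, D k ω) ≤ x}ᶜ = ⋂ k, (Θ k ⁻¹' {θ : ℝ | y ≤ Real.cos θ})ᶜ := by
      rw [hUnion, Set.compl_iUnion]
    have hmeasU : MeasurableSet {ω | (⨅ k, D k ω) ≤ x} := by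
      rw [hUnion]
      exact MeasurableSet.iUnion fun k => (hmeas k) hAmeas
    have := prob_compl_eq_one_sub (μ := P) hmeasU
    rw [hcompl, hinter] at this
    have hgoal : P {ω | (⨅ k, D k ω) ≤ x} = 1 - ENNReal.ofReal ((1 - p) ^ N) := by
      rw [this, ENNReal.sub_sub_cancel ENNReal.one_ne_top prob_le_one]
    rw [hgoal, ← ENNReal.ofReal_one, ← ENNReal.ofReal_sub _ (pow_nonneg (by linarith) N)]
    congr 1
    rw [hp]
    ring
  · intro x hx
    have hempty : {ω | (⨅ k, D k ω) ≤ x} = ∅ := by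
      ext ω
      simp only [mem_setOf_eq, mem_empty_iff_false, iff_false, not_le]
      exact lt_of_lt_of_le hx (le_ciInf fun k => hDge k ω)
    rw [hempty]
    simp
end

section
/- Let a > 0, β > 0, and set μ = (Γ(a+1))^{−1/a}, where Γ is the Gamma function. Define F(t) = (1/Γ(a)) · ∫_0^{t/β} s^{a−1} e^{−s} ds for t > 0 (the CDF of a Gamma random variable with shape a and scale β). Then for every t > 0: if a ≤ 1 then F(t) ≤ (1 − e^{−μ t / β})^a, and if a > 1 then F(t) > (1 − e^{−μ t / β})^a. -/
open Real Set Filter MeasureTheory intervalIntegral Topology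

noncomputable def psi (a μ : ℝ) (x : ℝ) : ℝ :=
  (1 / Real.Gamma a) * (∫ s in (0:ℝ)..x, s ^ (a - 1) * Real.exp (-s))
    - (1 - Real.exp (-(μ * x))) ^ a

noncomputable def psid (a μ : ℝ) (x : ℝ) : ℝ :=
  (1 / Real.Gamma a) * (x ^ (a - 1) * Real.exp (-x))
    - μ * Real.exp (-(μ * x)) * a * (1 - Real.exp (-(μ * x))) ^ (a - 1)

noncomputable def phi (a μ : ℝ) (x : ℝ) : ℝ :=
  (μ - 1) * x + (a - 1) * (Real.log (μ * x) - Real.log (1 - Real.exp (-(μ * x))))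

noncomputable def phid (a μ : ℝ) (x : ℝ) : ℝ :=
  (μ - 1) + (a - 1) * (1 / x - μ * Real.exp (-(μ * x)) / (1 - Real.exp (-(μ * x))))

-- basic positivity
lemma one_sub_exp_pos {μ x : ℝ} (hμ : 0 < μ) (hx : 0 < x) :
    0 < 1 - Real.exp (-(μ * x)) := by
  have : Real.exp (-(μ * x)) < 1 := by
    rw [Real.exp_lt_one_iff]; nlinarith
  linarith

-- integrability
lemma integrable_aux {a : ℝ} (ha : 0 < a) {x : ℝ} (h : 0 ≤ x) :
    IntervalIntegrable (fun s : ℝ => s ^ (a - 1) * Real.exp (-s)) volume 0 x := by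
  rw [intervalIntegrable_iff_integrableOn_Ioc_of_le h]
  refine (((Real.GammaIntegral_convergent ha).mono_set
    (Ioc_subset_Ioi_self)).congr_fun ?_ measurableSet_Ioc)
  intro s _; ring


lemma psi_zero {a μ : ℝ} (ha : 0 < a) : psi a μ 0 = 0 := by
  simp [psi, Real.zero_rpow ha.ne']

lemma psi_continuousOn {a μ : ℝ} (ha : 0 < a) (hμ : 0 < μ) {b : ℝ} (hb : 0 ≤ b) :
    ContinuousOn (psi a μ) (Icc 0 b) := by
  unfold psi
  apply ContinuousOn.sub
  · apply ContinuousOn.mul continuousOn_const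
    have h1 : ContinuousOn (fun x : ℝ => ∫ s in (0:ℝ)..x, s ^ (a - 1) * Real.exp (-s))
        (uIcc 0 b) := by
      apply continuousOn_primitive_interval
      have := integrable_aux ha hb
      rw [intervalIntegrable_iff_integrableOn_Ioc_of_le hb] at this
      rw [uIcc_of_le hb, integrableOn_Icc_iff_integrableOn_Ioc]
      exact this
    rwa [uIcc_of_le hb] at h1
  · apply Continuous.continuousOn
    rw [continuous_iff_continuousAt]
    intro x
    apply ContinuousAt.rpow_const
    · fun_prop
    · right; exact ha.le

lemma hasDerivAt_psi {a μ : ℝ} (ha : 0 < a) (hμ : 0 < μ) {x : ℝ} (hx : 0 < x) :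
    HasDerivAt (psi a μ) (psid a μ x) x := by
  have h1 : HasDerivAt (fun u : ℝ => ∫ s in (0:ℝ)..u, s ^ (a - 1) * Real.exp (-s))
      (x ^ (a - 1) * Real.exp (-x)) x := by
    apply intervalIntegral.integral_hasDerivAt_right (integrable_aux ha hx.le)
    · exact ((measurable_id.pow_const _).mul (by fun_prop)).stronglyMeasurable.stronglyMeasurableAtFilter
    · apply ContinuousAt.mul
      · exact Real.continuousAt_rpow_const _ _ (Or.inl hx.ne')
      · fun_prop
  have h2 : HasDerivAt (fun u : ℝ => 1 - Real.exp (-(μ * u))) (μ * Real.exp (-(μ * x))) x := by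
    have : HasDerivAt (fun u : ℝ => Real.exp (-(μ * u))) (Real.exp (-(μ * x)) * (-μ)) x := by
      exact (Real.hasDerivAt_exp _).comp x (by simpa using ((hasDerivAt_id x).const_mul (-μ)))
    have := this.const_sub 1
    exact this.congr_deriv (by ring)
  have h3 : HasDerivAt (fun u : ℝ => (1 - Real.exp (-(μ * u))) ^ a)
      (μ * Real.exp (-(μ * x)) * a * (1 - Real.exp (-(μ * x))) ^ (a - 1)) x :=
    h2.rpow_const (Or.inl (one_sub_exp_pos hμ hx).ne')
  exact ((h1.const_mul (1 / Real.Gamma a)).sub h3)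

section signs
variable {a μ : ℝ} (ha : 0 < a) (hμpos : 0 < μ)
  (hlog : Real.log (Real.Gamma (a + 1)) = -a * Real.log μ)

include ha hμpos hlog in
lemma log_sub_eq_phi {x : ℝ} (hx : 0 < x) :
    Real.log ((1 / Real.Gamma a) * (x ^ (a - 1) * Real.exp (-x)))
      - Real.log (μ * Real.exp (-(μ * x)) * a * (1 - Real.exp (-(μ * x))) ^ (a - 1))
      = phi a μ x := by
  have hΓ : 0 < Real.Gamma a := Real.Gamma_pos_of_pos ha
  have h1 : 0 < 1 - Real.exp (-(μ * x)) := one_sub_exp_pos hμpos hx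
  have hΓ1 : Real.Gamma (a + 1) = a * Real.Gamma a := Real.Gamma_add_one ha.ne'
  have e1 : Real.log ((1 / Real.Gamma a) * (x ^ (a - 1) * Real.exp (-x)))
      = -Real.log (Real.Gamma a) + ((a - 1) * Real.log x + (-x)) := by
    rw [Real.log_mul (by positivity) (by positivity), Real.log_mul (by positivity)
      (Real.exp_pos _).ne', Real.log_rpow hx, Real.log_exp, one_div, Real.log_inv]
  have e2 : Real.log (μ * Real.exp (-(μ * x)) * a * (1 - Real.exp (-(μ * x))) ^ (a - 1))
      = Real.log μ + (-(μ * x)) + Real.log a + (a - 1) * Real.log (1 - Real.exp (-(μ * x))) := by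
    rw [Real.log_mul (by positivity) (by positivity), Real.log_mul (by positivity)
      (by positivity), Real.log_mul hμpos.ne' (Real.exp_pos _).ne', Real.log_exp,
      Real.log_rpow h1]
  have e3 : Real.log a + Real.log (Real.Gamma a) = -a * Real.log μ := by
    rw [← Real.log_mul ha.ne' hΓ.ne', ← hΓ1]; exact hlog
  have e4 : Real.log (μ * x) = Real.log μ + Real.log x :=
    Real.log_mul hμpos.ne' hx.ne'
  rw [e1, e2]
  unfold phi
  rw [e4]
  nlinarith [e3]

include ha hμpos hlog in
lemma psid_pos_iff {x : ℝ} (hx : 0 < x) : 0 < psid a μ x ↔ 0 < phi a μ x := by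
  have hΓ : 0 < Real.Gamma a := Real.Gamma_pos_of_pos ha
  have h1 : 0 < 1 - Real.exp (-(μ * x)) := one_sub_exp_pos hμpos hx
  have hA : 0 < (1 / Real.Gamma a) * (x ^ (a - 1) * Real.exp (-x)) := by positivity
  have hB : 0 < μ * Real.exp (-(μ * x)) * a * (1 - Real.exp (-(μ * x))) ^ (a - 1) := by
    positivity
  rw [← log_sub_eq_phi ha hμpos hlog hx]
  unfold psid
  constructor
  · intro h; rw [sub_pos] at h ⊢; exact Real.log_lt_log hB h
  · intro h; rw [sub_pos] at h ⊢; exact (Real.log_lt_log_iff hB hA).mp h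

include ha hμpos hlog in
lemma psid_neg_iff {x : ℝ} (hx : 0 < x) : psid a μ x < 0 ↔ phi a μ x < 0 := by
  have hΓ : 0 < Real.Gamma a := Real.Gamma_pos_of_pos ha
  have h1 : 0 < 1 - Real.exp (-(μ * x)) := one_sub_exp_pos hμpos hx
  have hA : 0 < (1 / Real.Gamma a) * (x ^ (a - 1) * Real.exp (-x)) := by positivity
  have hB : 0 < μ * Real.exp (-(μ * x)) * a * (1 - Real.exp (-(μ * x))) ^ (a - 1) := by
    positivity
  rw [← log_sub_eq_phi ha hμpos hlog hx]
  unfold psid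
  constructor
  · intro h; rw [sub_neg] at h ⊢; exact Real.log_lt_log hA h
  · intro h; rw [sub_neg] at h ⊢; exact (Real.log_lt_log_iff hA hB).mp h

end signs

-- phi at zero and continuity from the right
lemma phi_zero (a μ : ℝ) : phi a μ 0 = 0 := by simp [phi]

lemma tendsto_one_sub_exp_div : Tendsto (fun y : ℝ => (1 - Real.exp (-y)) / y)
    (𝓝[≠] 0) (𝓝 1) := by
  have h : HasDerivAt (fun y : ℝ => 1 - Real.exp (-y)) 1 0 := by
    have : HasDerivAt (fun y : ℝ => Real.exp (-y)) (Real.exp (-(0:ℝ)) * (-1)) 0 :=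
      (Real.hasDerivAt_exp _).comp 0 (by simpa using hasDerivAt_neg (0:ℝ))
    have := this.const_sub 1
    exact this.congr_deriv (by simp)
  have := hasDerivAt_iff_tendsto_slope.mp h
  refine this.congr' ?_
  filter_upwards [self_mem_nhdsWithin] with y hy
  simp only [slope, Real.exp_zero, sub_zero, neg_zero]
  rw [div_eq_inv_mul]
  norm_num

lemma phi_continuousWithinAt {a μ : ℝ} (hμpos : 0 < μ) :
    ContinuousWithinAt (phi a μ) (Ici 0) 0 := by
  rw [← continuousWithinAt_diff_self]
  have hset : (Ici (0:ℝ)) \ {0} = Ioi 0 := by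
    ext y; simp [mem_diff, mem_Ici, mem_Ioi, lt_iff_le_and_ne, eq_comm]
  rw [hset]
  unfold ContinuousWithinAt
  rw [phi_zero]
  have hmap : Tendsto (fun x : ℝ => μ * x) (𝓝[>] 0) (𝓝[≠] 0) := by
    have hbase : Tendsto (fun x : ℝ => μ * x) (𝓝[>] 0) (𝓝 0) := by
      have h : Tendsto (fun x : ℝ => μ * x) (𝓝 0) (𝓝 (μ * 0)) :=
        (continuous_const.mul continuous_id).tendsto 0
      simp only [mul_zero] at h
      exact h.mono_left nhdsWithin_le_nhds
    have h2 : Tendsto (fun x : ℝ => μ * x) (𝓝[>] 0) (𝓝[>] 0) := by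
      apply tendsto_nhdsWithin_of_tendsto_nhds_of_eventually_within _ hbase
      filter_upwards [self_mem_nhdsWithin] with x hx
      have hx : (0:ℝ) < x := hx
      exact mul_pos hμpos hx
    exact h2.mono_right (nhdsWithin_mono 0 (fun y hy => ne_of_gt hy))
  have h1 : Tendsto (fun x : ℝ => (1 - Real.exp (-(μ * x))) / (μ * x)) (𝓝[>] 0) (𝓝 1) :=
    tendsto_one_sub_exp_div.comp hmap
  have h2 : Tendsto (fun x : ℝ => Real.log ((1 - Real.exp (-(μ * x))) / (μ * x)))
      (𝓝[>] 0) (𝓝 0) := by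
    have := (Real.continuousAt_log one_ne_zero).tendsto.comp h1
    simpa [Function.comp_def] using this
  have h3 : Tendsto (fun x : ℝ => (μ - 1) * x + (a - 1) *
      (-(Real.log ((1 - Real.exp (-(μ * x))) / (μ * x))))) (𝓝[>] 0) (𝓝 0) := by
    have l1 : Tendsto (fun x : ℝ => (μ - 1) * x) (𝓝[>] 0) (𝓝 0) := by
      have h : Tendsto (fun x : ℝ => (μ - 1) * x) (𝓝 0) (𝓝 ((μ - 1) * 0)) :=
        (continuous_const.mul continuous_id).tendsto 0
      simp only [mul_zero] at h
      exact h.mono_left nhdsWithin_le_nhds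
    have := l1.add ((h2.neg).const_mul (a - 1))
    simpa using this
  refine h3.congr' ?_
  filter_upwards [self_mem_nhdsWithin] with x hx
  have hx : (0:ℝ) < x := hx
  have h1' : 0 < 1 - Real.exp (-(μ * x)) := one_sub_exp_pos hμpos hx
  rw [Real.log_div h1'.ne' (by positivity)]
  unfold phi
  ring

lemma hasDerivAt_phi {a μ : ℝ} (hμpos : 0 < μ) {x : ℝ} (hx : 0 < x) :
    HasDerivAt (phi a μ) (phid a μ x) x := by
  have h1 : 0 < 1 - Real.exp (-(μ * x)) := one_sub_exp_pos hμpos hx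
  have hmul : HasDerivAt (fun u : ℝ => μ * u) μ x := by
    simpa using (hasDerivAt_id x).const_mul μ
  have hlog1 : HasDerivAt (fun u : ℝ => Real.log (μ * u)) (1 / x) x := by
    have := (hmul.log (by positivity))
    convert this using 1
    field_simp
  have hexp : HasDerivAt (fun u : ℝ => Real.exp (-(μ * u))) (Real.exp (-(μ * x)) * (-μ)) x :=
    (Real.hasDerivAt_exp _).comp x (by simpa using ((hasDerivAt_id x).const_mul (-μ)))
  have hinner : HasDerivAt (fun u : ℝ => 1 - Real.exp (-(μ * u))) (μ * Real.exp (-(μ * x))) x := by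
    have := hexp.const_sub 1
    exact this.congr_deriv (by ring)
  have hlog2 : HasDerivAt (fun u : ℝ => Real.log (1 - Real.exp (-(μ * u))))
      (μ * Real.exp (-(μ * x)) / (1 - Real.exp (-(μ * x)))) x := hinner.log h1.ne'
  have hlin : HasDerivAt (fun u : ℝ => (μ - 1) * u) (μ - 1) x := by
    simpa using (hasDerivAt_id x).const_mul (μ - 1)
  have := hlin.add (((hlog1.sub hlog2)).const_mul (a - 1))
  exact this

-- strict monotonicity of k x = 1/x - μ e^{-μx}/(1-e^{-μx})
noncomputable def kf (μ : ℝ) (x : ℝ) : ℝ :=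
  1 / x - μ * Real.exp (-(μ * x)) / (1 - Real.exp (-(μ * x)))

lemma hasDerivAt_kf {μ : ℝ} (hμpos : 0 < μ) {x : ℝ} (hx : 0 < x) :
    HasDerivAt (kf μ)
      (-(1 / x ^ 2) + μ ^ 2 * Real.exp (-(μ * x)) / (1 - Real.exp (-(μ * x))) ^ 2) x := by
  have h1 : 0 < 1 - Real.exp (-(μ * x)) := one_sub_exp_pos hμpos hx
  have hexp : HasDerivAt (fun u : ℝ => Real.exp (-(μ * u))) (Real.exp (-(μ * x)) * (-μ)) x :=
    (Real.hasDerivAt_exp _).comp x (by simpa using ((hasDerivAt_id x).const_mul (-μ)))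
  have hinv : HasDerivAt (fun u : ℝ => 1 / u) (-(1 / x ^ 2)) x := by
    have h := hasDerivAt_inv hx.ne'
    simp only [one_div]
    convert h using 1
  have hnum : HasDerivAt (fun u : ℝ => μ * Real.exp (-(μ * u)))
      (μ * (Real.exp (-(μ * x)) * (-μ))) x := hexp.const_mul μ
  have hden : HasDerivAt (fun u : ℝ => 1 - Real.exp (-(μ * u))) (μ * Real.exp (-(μ * x))) x := by
    have := hexp.const_sub 1
    exact this.congr_deriv (by ring)
  have hq : HasDerivAt (fun u : ℝ => μ * Real.exp (-(μ * u)) / (1 - Real.exp (-(μ * u))))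
      ((μ * (Real.exp (-(μ * x)) * (-μ)) * (1 - Real.exp (-(μ * x)))
        - μ * Real.exp (-(μ * x)) * (μ * Real.exp (-(μ * x))))
        / (1 - Real.exp (-(μ * x))) ^ 2) x := hnum.div hden h1.ne'
  have := hinv.sub hq
  refine this.congr_deriv ?_
  have hE : Real.exp (-(μ * x)) = Real.exp (-(μ * x)) := rfl
  field_simp
  ring

lemma kf_deriv_neg {μ : ℝ} (hμpos : 0 < μ) {x : ℝ} (hx : 0 < x) :
    -(1 / x ^ 2) + μ ^ 2 * Real.exp (-(μ * x)) / (1 - Real.exp (-(μ * x))) ^ 2 < 0 := by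
  have h1 : 0 < 1 - Real.exp (-(μ * x)) := one_sub_exp_pos hμpos hx
  set y := μ * x with hy
  have hy0 : 0 < y := by positivity
  -- key : y * exp(-y/2) < 1 - exp(-y)
  have key : y * Real.exp (-(y / 2)) < 1 - Real.exp (-y) := by
    have hs : y / 2 < Real.sinh (y / 2) := Real.self_lt_sinh_iff.mpr (by positivity)
    have hsinh : Real.sinh (y / 2) = (Real.exp (y / 2) - Real.exp (-(y / 2))) / 2 :=
      Real.sinh_eq _
    have hE : 0 < Real.exp (-(y / 2)) := Real.exp_pos _
    have h2 : y < Real.exp (y / 2) - Real.exp (-(y / 2)) := by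
      rw [hsinh] at hs; linarith
    have := mul_lt_mul_of_pos_right h2 hE
    calc y * Real.exp (-(y / 2)) < (Real.exp (y / 2) - Real.exp (-(y / 2))) * Real.exp (-(y / 2)) := this
      _ = 1 - Real.exp (-y) := by
          rw [sub_mul, ← Real.exp_add, ← Real.exp_add]
          norm_num
          ring_nf
  -- square both sides
  have hsq : y ^ 2 * Real.exp (-y) < (1 - Real.exp (-y)) ^ 2 := by
    have hl : 0 < y * Real.exp (-(y / 2)) := by positivity
    have := mul_self_lt_mul_self hl.le key
    have hexp2 : Real.exp (-(y / 2)) * Real.exp (-(y / 2)) = Real.exp (-y) := by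
      rw [← Real.exp_add]; ring_nf
    calc y ^ 2 * Real.exp (-y) = (y * Real.exp (-(y / 2))) * (y * Real.exp (-(y / 2))) := by
          rw [← hexp2]; ring
      _ < (1 - Real.exp (-y)) * (1 - Real.exp (-y)) := this
      _ = (1 - Real.exp (-y)) ^ 2 := by ring
  rw [neg_add_lt_iff_lt_add, add_zero, div_lt_div_iff₀ (by positivity) (by positivity)]
  have hx2 : y ^ 2 = μ ^ 2 * x ^ 2 := by rw [hy]; ring
  nlinarith [hsq, Real.exp_pos (-y)]

lemma kf_strictAnti {μ : ℝ} (hμpos : 0 < μ) : StrictAntiOn (kf μ) (Ioi 0) := by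
  apply strictAntiOn_of_deriv_neg (convex_Ioi 0)
  · intro x hx
    exact (hasDerivAt_kf hμpos hx).continuousAt.continuousWithinAt
  · intro x hx
    rw [interior_Ioi] at hx
    rw [(hasDerivAt_kf hμpos hx).deriv]
    exact kf_deriv_neg hμpos hx

lemma psi_tendsto_atTop {a μ : ℝ} (ha : 0 < a) (hμpos : 0 < μ) :
    Tendsto (psi a μ) atTop (𝓝 0) := by
  have hΓ : 0 < Real.Gamma a := Real.Gamma_pos_of_pos ha
  have h1 : Tendsto (fun x : ℝ => ∫ s in (0:ℝ)..x, s ^ (a - 1) * Real.exp (-s)) atTop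
      (𝓝 (Real.Gamma a)) := by
    have hint : IntegrableOn (fun s : ℝ => s ^ (a - 1) * Real.exp (-s)) (Ioi 0) :=
      ((Real.GammaIntegral_convergent ha).congr_fun (fun s _ => by ring) measurableSet_Ioi)
    have h := MeasureTheory.intervalIntegral_tendsto_integral_Ioi 0 hint tendsto_id
    have heq : (∫ s in Ioi (0:ℝ), s ^ (a - 1) * Real.exp (-s)) = Real.Gamma a := by
      rw [Real.Gamma_eq_integral ha]
      apply setIntegral_congr_fun measurableSet_Ioi
      intro s _; ring
    rwa [heq] at h
  have h2 : Tendsto (fun x : ℝ => (1 - Real.exp (-(μ * x))) ^ a) atTop (𝓝 1) := by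
    have hexp : Tendsto (fun x : ℝ => Real.exp (-(μ * x))) atTop (𝓝 0) := by
      apply Real.tendsto_exp_atBot.comp
      have : Tendsto (fun x : ℝ => μ * x) atTop atTop :=
        Tendsto.const_mul_atTop hμpos tendsto_id
      exact (tendsto_neg_atTop_atBot.comp this).congr (fun x => rfl)
    have hbase : Tendsto (fun x : ℝ => 1 - Real.exp (-(μ * x))) atTop (𝓝 1) := by
      have := hexp.const_sub 1
      simpa using this
    have hc : ContinuousAt (fun z : ℝ => z ^ a) 1 :=
      Real.continuousAt_rpow_const 1 a (Or.inl one_ne_zero)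
    have := hc.tendsto.comp hbase
    simpa [Real.one_rpow, Function.comp_def] using this
  have := (h1.const_mul (1 / Real.Gamma a)).sub h2
  unfold psi
  convert this using 2
  field_simp
  norm_num

section main
variable {a μ : ℝ}

lemma phi_contOn (hμpos : 0 < μ) {c : ℝ} : ContinuousOn (phi a μ) (Icc 0 c) := by
  intro x hx
  rcases eq_or_lt_of_le hx.1 with h | hxpos
  · rw [← h]
    exact (phi_continuousWithinAt hμpos).mono Icc_subset_Ici_self
  · exact (hasDerivAt_phi hμpos hxpos).continuousAt.continuousWithinAt

lemma phid_eq_kf (x : ℝ) : phid a μ x = (μ - 1) + (a - 1) * kf μ x := rfl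

lemma main_lt (ha : 0 < a) (hμpos : 0 < μ)
    (hlog : Real.log (Real.Gamma (a + 1)) = -a * Real.log μ)
    (ha1 : a < 1) {x0 : ℝ} (hx0 : 0 < x0) : psi a μ x0 < 0 := by
  by_cases hcase : ∀ x ∈ Ioc 0 x0, phi a μ x < 0
  · have hanti : StrictAntiOn (psi a μ) (Icc 0 x0) := by
      apply strictAntiOn_of_deriv_neg (convex_Icc 0 x0) (psi_continuousOn ha hμpos hx0.le)
      intro x hx
      rw [interior_Icc] at hx
      rw [(hasDerivAt_psi ha hμpos hx.1).deriv]
      exact (psid_neg_iff ha hμpos hlog hx.1).mpr (hcase x ⟨hx.1, hx.2.le⟩)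
    have := hanti (left_mem_Icc.mpr hx0.le) (right_mem_Icc.mpr hx0.le) hx0
    rwa [psi_zero ha] at this
  · push_neg at hcase
    obtain ⟨x1, hx1, hphi1⟩ := hcase
    obtain ⟨hx1a, hx1b⟩ := hx1
    obtain ⟨ξ, hξ, hslope⟩ := exists_hasDerivAt_eq_slope (phi a μ) (phid a μ) hx1a
      (phi_contOn hμpos) (fun x hx => hasDerivAt_phi hμpos hx.1)
    have hξpos : 0 < ξ := hξ.1
    have hphidξ : 0 ≤ phid a μ ξ := by
      rw [hslope, phi_zero]
      apply div_nonneg (by linarith) (by linarith)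
    have hphid_pos : ∀ x, ξ < x → 0 < phid a μ x := by
      intro x hx
      have hk : kf μ x < kf μ ξ := kf_strictAnti hμpos hξpos (hξpos.trans hx) hx
      rw [phid_eq_kf] at hphidξ ⊢
      nlinarith
    have hphi_pos : ∀ x, x1 < x → 0 < phi a μ x := by
      have hmono : StrictMonoOn (phi a μ) (Ici ξ) := by
        apply strictMonoOn_of_deriv_pos (convex_Ici ξ)
        · intro x hx
          exact (hasDerivAt_phi hμpos (lt_of_lt_of_le hξpos hx)).continuousAt.continuousWithinAt
        · intro x hx
          rw [interior_Ici] at hx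
          rw [(hasDerivAt_phi hμpos (hξpos.trans hx)).deriv]
          exact hphid_pos x hx
      intro x hx
      have h1 : phi a μ x1 < phi a μ x :=
        hmono (mem_Ici.mpr hξ.2.le) (mem_Ici.mpr (hξ.2.le.trans hx.le)) hx
      linarith
    have hmono : StrictMonoOn (psi a μ) (Ici x0) := by
      apply strictMonoOn_of_deriv_pos (convex_Ici x0)
      · intro x hx
        exact (hasDerivAt_psi ha hμpos (lt_of_lt_of_le hx0 hx)).continuousAt.continuousWithinAt
      · intro x hx
        rw [interior_Ici] at hx
        rw [(hasDerivAt_psi ha hμpos (hx0.trans hx)).deriv]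
        exact (psid_pos_iff ha hμpos hlog (hx0.trans hx)).mpr
          (hphi_pos x (lt_of_le_of_lt hx1b hx))
    have hle : psi a μ (x0 + 1) ≤ 0 := by
      apply ge_of_tendsto (psi_tendsto_atTop ha hμpos)
      filter_upwards [eventually_gt_atTop (x0 + 1)] with x hx
      exact (hmono (mem_Ici.mpr (by linarith)) (mem_Ici.mpr (by linarith)) hx).le
    have := hmono (mem_Ici.mpr (le_refl x0)) (mem_Ici.mpr (le_of_lt (lt_add_one x0)))
      (lt_add_one x0)
    linarith

lemma main_gt (ha : 0 < a) (hμpos : 0 < μ)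
    (hlog : Real.log (Real.Gamma (a + 1)) = -a * Real.log μ)
    (ha1 : 1 < a) {x0 : ℝ} (hx0 : 0 < x0) : 0 < psi a μ x0 := by
  by_cases hcase : ∀ x ∈ Ioc 0 x0, 0 < phi a μ x
  · have hmono : StrictMonoOn (psi a μ) (Icc 0 x0) := by
      apply strictMonoOn_of_deriv_pos (convex_Icc 0 x0) (psi_continuousOn ha hμpos hx0.le)
      intro x hx
      rw [interior_Icc] at hx
      rw [(hasDerivAt_psi ha hμpos hx.1).deriv]
      exact (psid_pos_iff ha hμpos hlog hx.1).mpr (hcase x ⟨hx.1, hx.2.le⟩)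
    have := hmono (left_mem_Icc.mpr hx0.le) (right_mem_Icc.mpr hx0.le) hx0
    rwa [psi_zero ha] at this
  · push_neg at hcase
    obtain ⟨x1, hx1, hphi1⟩ := hcase
    obtain ⟨hx1a, hx1b⟩ := hx1
    obtain ⟨ξ, hξ, hslope⟩ := exists_hasDerivAt_eq_slope (phi a μ) (phid a μ) hx1a
      (phi_contOn hμpos) (fun x hx => hasDerivAt_phi hμpos hx.1)
    have hξpos : 0 < ξ := hξ.1
    have hphidξ : phid a μ ξ ≤ 0 := by
      rw [hslope, phi_zero]
      apply div_nonpos_of_nonpos_of_nonneg (by linarith) (by linarith)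
    have hphid_neg : ∀ x, ξ < x → phid a μ x < 0 := by
      intro x hx
      have hk : kf μ x < kf μ ξ := kf_strictAnti hμpos hξpos (hξpos.trans hx) hx
      rw [phid_eq_kf] at hphidξ ⊢
      nlinarith
    have hphi_neg : ∀ x, x1 < x → phi a μ x < 0 := by
      have hanti : StrictAntiOn (phi a μ) (Ici ξ) := by
        apply strictAntiOn_of_deriv_neg (convex_Ici ξ)
        · intro x hx
          exact (hasDerivAt_phi hμpos (lt_of_lt_of_le hξpos hx)).continuousAt.continuousWithinAt
        · intro x hx
          rw [interior_Ici] at hx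
          rw [(hasDerivAt_phi hμpos (hξpos.trans hx)).deriv]
          exact hphid_neg x hx
      intro x hx
      have h1 : phi a μ x < phi a μ x1 :=
        hanti (mem_Ici.mpr hξ.2.le) (mem_Ici.mpr (hξ.2.le.trans hx.le)) hx
      linarith
    have hanti : StrictAntiOn (psi a μ) (Ici x0) := by
      apply strictAntiOn_of_deriv_neg (convex_Ici x0)
      · intro x hx
        exact (hasDerivAt_psi ha hμpos (lt_of_lt_of_le hx0 hx)).continuousAt.continuousWithinAt
      · intro x hx
        rw [interior_Ici] at hx
        rw [(hasDerivAt_psi ha hμpos (hx0.trans hx)).deriv]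
        exact (psid_neg_iff ha hμpos hlog (hx0.trans hx)).mpr
          (hphi_neg x (lt_of_le_of_lt hx1b hx))
    have hge : 0 ≤ psi a μ (x0 + 1) := by
      apply le_of_tendsto (psi_tendsto_atTop ha hμpos)
      filter_upwards [eventually_gt_atTop (x0 + 1)] with x hx
      exact (hanti (mem_Ici.mpr (by linarith)) (mem_Ici.mpr (by linarith)) hx).le
    have := hanti (mem_Ici.mpr (le_refl x0)) (mem_Ici.mpr (le_of_lt (lt_add_one x0)))
      (lt_add_one x0)
    linarith

end main

lemma psi_one_eq_zero (x : ℝ) : psi 1 1 x = 0 := by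
  unfold psi
  have key : (∫ s in (0:ℝ)..x, s ^ ((1:ℝ) - 1) * Real.exp (-s)) = 1 - Real.exp (-x) := by
    have h : ∀ s ∈ uIcc (0:ℝ) x, HasDerivAt (fun u : ℝ => -Real.exp (-u)) (Real.exp (-s)) s := by
      intro s _
      have h1 : HasDerivAt (fun u : ℝ => Real.exp (-u)) (Real.exp (-s) * (-1)) s :=
        (Real.hasDerivAt_exp _).comp s (by simpa using hasDerivAt_neg s)
      have := h1.neg
      exact this.congr_deriv (by ring)
    have hint : IntervalIntegrable (fun s : ℝ => Real.exp (-s)) volume 0 x :=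
      Continuous.intervalIntegrable (by fun_prop) 0 x
    have := intervalIntegral.integral_eq_sub_of_hasDerivAt h hint
    have heq : (∫ s in (0:ℝ)..x, s ^ ((1:ℝ) - 1) * Real.exp (-s))
        = ∫ s in (0:ℝ)..x, Real.exp (-s) := by
      apply intervalIntegral.integral_congr
      intro s _
      simp [Real.rpow_zero]
    rw [heq, this]
    simp
    ring
  rw [key]
  simp [Real.Gamma_one, Real.rpow_one]

/-- Tight bound on the CDF of a Gamma random variable with shape `a` and
scale `β`, with μ = Γ(a+1)^(−1/a). -/
theorem stmt6 (a β μ : ℝ) (ha : 0 < a) (hβ : 0 < β)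
    (hμ : μ = Real.Gamma (a + 1) ^ (-1 / a))
    (F : ℝ → ℝ)
    (hF : ∀ t, 0 < t →
      F t = (1 / Real.Gamma a) * ∫ s in (0:ℝ)..(t / β), s ^ (a - 1) * Real.exp (-s)) :
    ∀ t, 0 < t →
      (a ≤ 1 → F t ≤ (1 - Real.exp (-(μ * t) / β)) ^ a) ∧
      (1 < a → (1 - Real.exp (-(μ * t) / β)) ^ a < F t) := by
  have hΓ1 : 0 < Real.Gamma (a + 1) := Real.Gamma_pos_of_pos (by linarith)
  have hμpos : 0 < μ := hμ ▸ Real.rpow_pos_of_pos hΓ1 _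
  have hlog : Real.log (Real.Gamma (a + 1)) = -a * Real.log μ := by
    rw [hμ, Real.log_rpow hΓ1]
    field_simp
  intro t ht
  have hx : 0 < t / β := div_pos ht hβ
  have harg : -(μ * t) / β = -(μ * (t / β)) := by field_simp
  have hrw : F t - (1 - Real.exp (-(μ * t) / β)) ^ a = psi a μ (t / β) := by
    rw [hF t ht, harg]; rfl
  constructor
  · intro hle
    rcases lt_or_eq_of_le hle with hlt | heq
    · have := main_lt ha hμpos hlog hlt hx
      linarith [hrw ▸ this]
    · subst heq
      have hμ1 : μ = 1 := by
        rw [hμ]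
        norm_num [Real.Gamma_two]
      subst hμ1
      have := psi_one_eq_zero (t / β)
      linarith [hrw ▸ this]
  · intro hgt
    have := main_gt ha hμpos hlog hgt hx
    linarith [hrw ▸ this]
end

section
/- Let 0 < r_e < r_s, a_s = r_s − r_e, d_max = √(r_s² − r_e²), and let N be a positive integer. Let D be a random variable with probability density f_N(x) = (N x)/(π r_e r_s · √(1 − (1 − (x² − a_s²)/(2 r_e r_s))²)) · [1 − (1/π)·arccos(1 − (x² − a_s²)/(2 r_e r_s))]^{N−1} for a_s ≤ x < d_max and f_N(x) = 0 otherwise. Let α_s be a positive integer, β_s > 0, μ > 0, and let H be a random variable independent of D with P(H ≤ t) = (1 − e^{−μ t / β_s})^{α_s} for t ≥ 0. Then for every A > 0: P(H > A·D²) = (N/(π r_e r_s)) · ∫_{a_s}^{d_max} [ Σ_{j=1}^{α_s} C(α_s, j) (−1)^{j+1} exp(−j μ A x² / β_s) ] · x/√(1 − (1 − (x² − a_s²)/(2 r_e r_s))²) · [1 − (1/π)·arccos(1 − (x² − a_s²)/(2 r_e r_s))]^{N−1} dx. -/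
open MeasureTheory ProbabilityTheory Real Set

lemma binom_aux (α : ℕ) (u : ℝ) :
    1 - (1 - u) ^ α = ∑ j ∈ Finset.Icc 1 α, (α.choose j : ℝ) * (-1 : ℝ) ^ (j + 1) * u ^ j := by
  have h : (1 - u) ^ α = ∑ j ∈ Finset.range (α + 1), (-u) ^ j * (α.choose j : ℝ) := by
    rw [show (1 : ℝ) - u = -u + 1 by ring, add_pow]
    simp
  have hins : Finset.range (α + 1) = insert 0 (Finset.Icc 1 α) := by
    ext j
    simp [Nat.lt_succ_iff]
    omega
  rw [h, hins, Finset.sum_insert (by simp)]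
  simp only [pow_zero, one_mul, Nat.choose_zero_right, Nat.cast_one]
  rw [show (1 : ℝ) - (1 + ∑ j ∈ Finset.Icc 1 α, (-u) ^ j * (α.choose j : ℝ))
      = ∑ j ∈ Finset.Icc 1 α, -((-u) ^ j * (α.choose j : ℝ)) by
    rw [Finset.sum_neg_distrib]; ring]
  refine Finset.sum_congr rfl fun j _ => ?_
  rw [neg_pow, pow_succ]
  ring

/-- Downlink coverage probability of the S-U link: D is the contact distance
of the nearest of N satellites (with the stated density), H the fading power with the tight
Gamma-bound CDF, independent of D; then P(H > A·D²) is given by the stated integral. -/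
theorem stmt9 {Ω : Type*} [MeasurableSpace Ω] (P : Measure Ω) [IsProbabilityMeasure P]
    (r_e r_s a_s d_max : ℝ) (hre : 0 < r_e) (hrs : r_e < r_s)
    (has : a_s = r_s - r_e) (hdmax : d_max = Real.sqrt (r_s ^ 2 - r_e ^ 2))
    (N : ℕ) (hN : 0 < N)
    (f : ℝ → ℝ)
    (hf : ∀ x, f x = if a_s ≤ x ∧ x < d_max then
        (N * x) /
            (π * r_e * r_s *
              Real.sqrt (1 - (1 - (x ^ 2 - a_s ^ 2) / (2 * r_e * r_s)) ^ 2)) *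
          (1 - (1 / π) * Real.arccos (1 - (x ^ 2 - a_s ^ 2) / (2 * r_e * r_s))) ^ (N - 1)
      else 0)
    (D H : Ω → ℝ) (hDmeas : Measurable D) (hHmeas : Measurable H)
    (hDdist : P.map D = volume.withDensity fun x => ENNReal.ofReal (f x))
    (α_s : ℕ) (hαs : 0 < α_s) (β_s μ : ℝ) (hβs : 0 < β_s) (hμ : 0 < μ)
    (hH : ∀ t, 0 ≤ t →
      P {ω | H ω ≤ t} = ENNReal.ofReal ((1 - Real.exp (-(μ * t) / β_s)) ^ α_s))
    (hindep : IndepFun D H P)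
    (A : ℝ) (hA : 0 < A) :
    P {ω | A * D ω ^ 2 < H ω} =
      ENNReal.ofReal ((N / (π * r_e * r_s)) *
        ∫ x in Ioc a_s d_max,
          (∑ j ∈ Finset.Icc 1 α_s, (α_s.choose j : ℝ) * (-1 : ℝ) ^ (j + 1) *
              Real.exp (-((j : ℝ) * μ * A * x ^ 2) / β_s)) *
            (x / Real.sqrt (1 - (1 - (x ^ 2 - a_s ^ 2) / (2 * r_e * r_s)) ^ 2)) *
            (1 - (1 / π) * Real.arccos (1 - (x ^ 2 - a_s ^ 2) / (2 * r_e * r_s))) ^ (N - 1)) := by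
  have hπ : 0 < π := Real.pi_pos
  have has0 : 0 < a_s := by rw [has]; linarith
  -- the survival function of H composed with A x²
  set g : ℝ → ℝ := fun x => 1 - (1 - Real.exp (-(μ * (A * x ^ 2)) / β_s)) ^ α_s with hgdef
  have hexp_le_one : ∀ x : ℝ, Real.exp (-(μ * (A * x ^ 2)) / β_s) ≤ 1 := by
    intro x
    rw [Real.exp_le_one_iff]
    apply div_nonpos_of_nonpos_of_nonneg _ hβs.le
    have : 0 ≤ μ * (A * x ^ 2) := by positivity
    linarith
  have hpow_nonneg : ∀ x : ℝ, 0 ≤ (1 - Real.exp (-(μ * (A * x ^ 2)) / β_s)) ^ α_s := by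
    intro x
    exact pow_nonneg (by linarith [hexp_le_one x]) _
  have hg_nonneg : ∀ x, 0 ≤ g x := by
    intro x
    have h1 : (1 - Real.exp (-(μ * (A * x ^ 2)) / β_s)) ^ α_s ≤ 1 := by
      apply pow_le_one₀ (by linarith [hexp_le_one x])
      have := Real.exp_pos (-(μ * (A * x ^ 2)) / β_s)
      linarith
    simp only [hgdef]
    linarith
  have hf_nonneg : ∀ x, 0 ≤ f x := by
    intro x
    rw [hf x]
    split
    · rename_i hx
      obtain ⟨hx1, hx2⟩ := hx
      have hx0 : 0 ≤ x := le_trans has0.le hx1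
      apply mul_nonneg
      · exact div_nonneg (mul_nonneg (Nat.cast_nonneg N) hx0)
          (mul_nonneg (mul_nonneg (mul_nonneg hπ.le hre.le) (by linarith)) (Real.sqrt_nonneg _))
      · apply pow_nonneg
        have harc := Real.arccos_le_pi (1 - (x ^ 2 - a_s ^ 2) / (2 * r_e * r_s))
        have harc0 := Real.arccos_nonneg (1 - (x ^ 2 - a_s ^ 2) / (2 * r_e * r_s))
        have : (1 / π) * Real.arccos (1 - (x ^ 2 - a_s ^ 2) / (2 * r_e * r_s)) ≤ 1 := by
          rw [div_mul_eq_mul_div, one_mul, div_le_one hπ]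
          exact harc
        linarith
    · exact le_refl 0
  have hfm : Measurable f := by
    have : f = fun x => if x ∈ Ico a_s d_max then
        (N * x) /
            (π * r_e * r_s *
              Real.sqrt (1 - (1 - (x ^ 2 - a_s ^ 2) / (2 * r_e * r_s)) ^ 2)) *
          (1 - (1 / π) * Real.arccos (1 - (x ^ 2 - a_s ^ 2) / (2 * r_e * r_s))) ^ (N - 1)
      else 0 := by
      funext x; rw [hf x]; rfl
    rw [this]
    apply Measurable.ite measurableSet_Ico _ measurable_const
    apply Measurable.mul
    · apply Measurable.div (by fun_prop)
      apply Measurable.mul (by fun_prop)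
      exact (Real.continuous_sqrt.measurable).comp (by fun_prop)
    · apply Measurable.pow _ measurable_const
      have harcm : Measurable Real.arccos := Real.continuous_arccos.measurable
      fun_prop
  have hgm : Measurable g := by
    simp only [hgdef]; fun_prop
  -- instances
  have hPD : IsProbabilityMeasure (P.map D) := Measure.isProbabilityMeasure_map hDmeas.aemeasurable
  have hPH : IsProbabilityMeasure (P.map H) := Measure.isProbabilityMeasure_map hHmeas.aemeasurable
  have hmap : P.map (fun ω => (D ω, H ω)) = (P.map D).prod (P.map H) :=
    (indepFun_iff_map_prod_eq_prod_map_map hDmeas.aemeasurable hHmeas.aemeasurable).mp hindep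
  have hsm : MeasurableSet {p : ℝ × ℝ | A * p.1 ^ 2 < p.2} :=
    measurableSet_lt (by fun_prop) measurable_snd
  -- Step 1
  have step1 : P {ω | A * D ω ^ 2 < H ω} = ∫⁻ x, ENNReal.ofReal (g x) ∂(P.map D) := by
    have h1 : P {ω | A * D ω ^ 2 < H ω}
        = (P.map (fun ω => (D ω, H ω))) {p : ℝ × ℝ | A * p.1 ^ 2 < p.2} := by
      rw [Measure.map_apply (hDmeas.prodMk hHmeas) hsm]
      rfl
    rw [h1, hmap, Measure.prod_apply hsm]
    refine lintegral_congr fun x => ?_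
    have hpre : (Prod.mk x ⁻¹' {p : ℝ × ℝ | A * p.1 ^ 2 < p.2}) = Ioi (A * x ^ 2) := rfl
    rw [hpre, Measure.map_apply hHmeas measurableSet_Ioi]
    have hpre2 : H ⁻¹' Ioi (A * x ^ 2) = {ω | H ω ≤ A * x ^ 2}ᶜ := by
      ext ω; simp [not_le]
    have hms : MeasurableSet {ω | H ω ≤ A * x ^ 2} := hHmeas measurableSet_Iic
    rw [hpre2, prob_compl_eq_one_sub hms, hH (A * x ^ 2) (by positivity)]
    simp only [hgdef]
    rw [ENNReal.ofReal_sub 1 (hpow_nonneg x), ENNReal.ofReal_one]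
  -- Step 2
  have step2 : ∫⁻ x, ENNReal.ofReal (g x) ∂(P.map D)
      = ∫⁻ x in Ioo a_s d_max, ENNReal.ofReal (f x * g x) := by
    rw [hDdist, lintegral_withDensity_eq_lintegral_mul _ hfm.ennreal_ofReal hgm.ennreal_ofReal]
    have heq : (fun a => ((fun x => ENNReal.ofReal (f x)) * fun x => ENNReal.ofReal (g x)) a)
        = fun a => ENNReal.ofReal (f a * g a) := by
      funext a
      simp [ENNReal.ofReal_mul (hf_nonneg a)]
    rw [heq]
    have hind : (fun a => ENNReal.ofReal (f a * g a))
        = (Ico a_s d_max).indicator (fun a => ENNReal.ofReal (f a * g a)) := by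
      funext a
      by_cases ha : a ∈ Ico a_s d_max
      · rw [Set.indicator_of_mem ha]
      · rw [Set.indicator_of_notMem ha]
        have : f a = 0 := by
          rw [hf a, if_neg]
          simpa [Set.mem_Ico] using ha
        simp [this]
    calc ∫⁻ a, ENNReal.ofReal (f a * g a)
        = ∫⁻ a, (Ico a_s d_max).indicator (fun a => ENNReal.ofReal (f a * g a)) a := by
          exact lintegral_congr fun a => congrFun hind a
      _ = ∫⁻ a in Ico a_s d_max, ENNReal.ofReal (f a * g a) :=
          lintegral_indicator measurableSet_Ico _
      _ = ∫⁻ a in Ioo a_s d_max, ENNReal.ofReal (f a * g a) :=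
          (setLIntegral_congr Ioo_ae_eq_Ico).symm
  have hfin : (∫⁻ x in Ioo a_s d_max, ENNReal.ofReal (f x * g x)) ≠ ⊤ := by
    rw [← step2, ← step1]
    exact measure_ne_top P _
  -- Step 4 : lintegral to integral
  have step4 : ∫⁻ x in Ioo a_s d_max, ENNReal.ofReal (f x * g x)
      = ENNReal.ofReal (∫ x in Ioo a_s d_max, f x * g x) := by
    rw [integral_eq_lintegral_of_nonneg_ae
      (ae_of_all _ fun x => mul_nonneg (hf_nonneg x) (hg_nonneg x))
      ((hfm.mul hgm).aestronglyMeasurable.restrict),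
      ENNReal.ofReal_toReal hfin]
  -- Step 5 : pointwise identity on Ioo
  have step5 : ∫ x in Ioo a_s d_max, f x * g x
      = ∫ x in Ioo a_s d_max, ((N : ℝ) / (π * r_e * r_s)) *
          ((∑ j ∈ Finset.Icc 1 α_s, (α_s.choose j : ℝ) * (-1 : ℝ) ^ (j + 1) *
              Real.exp (-((j : ℝ) * μ * A * x ^ 2) / β_s)) *
            (x / Real.sqrt (1 - (1 - (x ^ 2 - a_s ^ 2) / (2 * r_e * r_s)) ^ 2)) *
            (1 - (1 / π) * Real.arccos (1 - (x ^ 2 - a_s ^ 2) / (2 * r_e * r_s))) ^ (N - 1)) := by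
    refine setIntegral_congr_fun measurableSet_Ioo fun x hx => ?_
    obtain ⟨hx1, hx2⟩ := hx
    have hgx : g x = ∑ j ∈ Finset.Icc 1 α_s, (α_s.choose j : ℝ) * (-1 : ℝ) ^ (j + 1) *
        Real.exp (-((j : ℝ) * μ * A * x ^ 2) / β_s) := by
      simp only [hgdef]
      rw [binom_aux]
      refine Finset.sum_congr rfl fun j _ => ?_
      rw [← Real.exp_nat_mul]
      congr 1
      ring
    rw [hf x, if_pos ⟨hx1.le, hx2⟩, hgx]
    ring
  -- assemble
  rw [step1, step2, step4, step5]
  congr 1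
  rw [integral_const_mul, integral_Ioc_eq_integral_Ioo]
end

section
/- Let 0 < r_e < r_s, a_s = r_s − r_e, d_max = √(r_s² − r_e²), let N_i be a positive integer, λ_c > 0, α > 0, Q_s > 0. Let Θ_1, …, Θ_{N_i} be independent random variables uniform on [−π, π], set D_k = √(r_e² + r_s² − 2 r_e r_s cos Θ_k), and call satellite k visible when D_k ≤ d_max. Let D_c be a random variable independent of (Θ_1, …, Θ_{N_i}) with P(D_c ≤ x) = 1 − exp(−λ_c π x²) for x ≥ 0. Then the probability of the event {for every k with D_k ≤ d_max, D_k > Q_s^{−α/2} D_c^{α/2}} equals ∫_0^{(a_s Q_s^{α/2})^{2/α}} 2π λ_c x e^{−π λ_c x²} dx + 2π λ_c ∫_{(a_s Q_s^{α/2})^{2/α}}^{(d_max Q_s^{α/2})^{2/α}} [1 − (1/π)·arccos(1 − (Q_s^{−α} x^{α} − a_s²)/(2 r_e r_s))]^{N_i} · x e^{−π λ_c x²} dx + 2π λ_c ∫_{(d_max Q_s^{α/2})^{2/α}}^{∞} [1 − (1/π)·arccos(r_e/r_s)]^{N_i} · x e^{−π λ_c x²} dx. -/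
open MeasureTheory ProbabilityTheory Real Set

lemma gauss_ftc {lam : ℝ} (hlam : 0 < lam) {a b : ℝ} (hab : a ≤ b) :
    ∫ x in Ioc a b, 2 * π * lam * x * Real.exp (-(π * lam * x ^ 2)) =
      Real.exp (-(π * lam * a ^ 2)) - Real.exp (-(π * lam * b ^ 2)) := by
  rw [← intervalIntegral.integral_of_le hab]
  have key : ∀ x ∈ uIcc a b, HasDerivAt (fun t => -Real.exp (-(π * lam * t ^ 2)))
      (2 * π * lam * x * Real.exp (-(π * lam * x ^ 2))) x := by
    intro x _
    have h1 : HasDerivAt (fun t : ℝ => -(π * lam * t ^ 2)) (-(π * lam * (2 * x))) x := by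
      have := ((hasDerivAt_pow 2 x).const_mul (π * lam)).fun_neg
      simpa [mul_comm, mul_assoc, mul_left_comm] using this
    have h2 := (h1.exp).fun_neg
    refine h2.congr_deriv ?_
    ring
  have := intervalIntegral.integral_eq_sub_of_hasDerivAt key
    (by apply Continuous.intervalIntegrable; continuity)
  rw [this]
  ring

lemma cos_set_vol {u : ℝ} (hu : -1 ≤ u) :
    volume {v | v ∈ Icc (-π) π ∧ u ≤ Real.cos v} = ENNReal.ofReal (2 * Real.arccos u) := by
  rcases le_or_gt u 1 with hu1 | hu1
  · have hset : {v | v ∈ Icc (-π) π ∧ u ≤ Real.cos v} = Icc (-Real.arccos u) (Real.arccos u) := by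
      ext v
      simp only [mem_setOf_eq, mem_Icc]
      constructor
      · rintro ⟨⟨h1, h2⟩, h3⟩
        have habs : |v| ≤ π := abs_le.mpr ⟨h1, h2⟩
        have : |v| ≤ Real.arccos u := by
          by_contra h
          push_neg at h
          have := Real.cos_lt_cos_of_nonneg_of_le_pi (Real.arccos_nonneg u) habs h
          rw [Real.cos_arccos hu hu1, Real.cos_abs] at this
          linarith
        exact abs_le.mp this
      · rintro ⟨h1, h2⟩
        have habs : |v| ≤ Real.arccos u := abs_le.mpr ⟨h1, h2⟩
        have hva : |v| ≤ π := habs.trans (Real.arccos_le_pi u)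
        refine ⟨⟨?_, ?_⟩, ?_⟩
        · linarith [abs_le.mp hva |>.1]
        · exact (abs_le.mp hva).2
        · have := Real.cos_le_cos_of_nonneg_of_le_pi (abs_nonneg v) (Real.arccos_le_pi u) habs
          rwa [Real.cos_arccos hu hu1, Real.cos_abs] at this
    rw [hset, Real.volume_Icc]
    congr 1
    ring
  · have hset : {v | v ∈ Icc (-π) π ∧ u ≤ Real.cos v} = ∅ := by
      ext v
      simp only [mem_setOf_eq, mem_empty_iff_false, iff_false, not_and]
      intro _
      push_neg
      exact lt_of_le_of_lt (Real.cos_le_one v) hu1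
    rw [hset, measure_empty, Real.arccos_eq_zero.mpr hu1.le]
    simp

lemma unif_B {r_e r_s d_max : ℝ} (hre : 0 < r_e) (hrs : r_e < r_s)
    (hdmax : d_max = Real.sqrt (r_s ^ 2 - r_e ^ 2)) {s : ℝ} (hs : 0 < s) :
    ((ENNReal.ofReal (2 * π))⁻¹ • volume.restrict (Icc (-π) π))
      {v : ℝ | Real.sqrt (r_e ^ 2 + r_s ^ 2 - 2 * r_e * r_s * Real.cos v) ≤ d_max →
               s < Real.sqrt (r_e ^ 2 + r_s ^ 2 - 2 * r_e * r_s * Real.cos v)} =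
    ENNReal.ofReal (1 - Real.arccos ((r_e ^ 2 + r_s ^ 2 - (min s d_max) ^ 2) / (2 * r_e * r_s)) / π) := by
  have hrs0 : 0 < r_s := hre.trans hrs
  have hrr : (0:ℝ) < 2 * r_e * r_s := by positivity
  have hd2 : d_max ^ 2 = r_s ^ 2 - r_e ^ 2 := by
    rw [hdmax, Real.sq_sqrt (by nlinarith)]
  have hdpos : 0 < d_max := by
    rw [hdmax]; exact Real.sqrt_pos.mpr (by nlinarith)
  set m := min s d_max with hm
  have hmpos : 0 < m := lt_min hs hdpos
  set u := (r_e ^ 2 + r_s ^ 2 - m ^ 2) / (2 * r_e * r_s) with hu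
  have hm2 : m ^ 2 ≤ d_max ^ 2 := by
    have := min_le_right s d_max
    nlinarith [hmpos.le]
  have hum1 : -1 ≤ u := by
    rw [hu, le_div_iff₀ hrr]
    nlinarith
  have hset : {v : ℝ | Real.sqrt (r_e ^ 2 + r_s ^ 2 - 2 * r_e * r_s * Real.cos v) ≤ d_max →
               s < Real.sqrt (r_e ^ 2 + r_s ^ 2 - 2 * r_e * r_s * Real.cos v)} =
      {v : ℝ | Real.cos v < u} := by
    ext v
    simp only [mem_setOf_eq]
    set w := r_e ^ 2 + r_s ^ 2 - 2 * r_e * r_s * Real.cos v with hw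
    have hwnn : 0 ≤ w := by
      have := Real.cos_le_one v
      nlinarith
    have hkey : ∀ c : ℝ, 0 < c → (Real.sqrt w ≤ c ↔ w ≤ c ^ 2) := by
      intro c hc
      constructor
      · intro h
        nlinarith [Real.sq_sqrt hwnn, Real.sqrt_nonneg w]
      · intro h
        calc Real.sqrt w ≤ Real.sqrt (c ^ 2) := Real.sqrt_le_sqrt h
          _ = c := Real.sqrt_sq hc.le
    constructor
    · intro h
      by_contra hcon
      push_neg at hcon
      have hcon2 := (div_le_iff₀ hrr).mp hcon
      have h1 : w ≤ m ^ 2 := by nlinarith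
      have h2 : Real.sqrt w ≤ d_max := (hkey d_max hdpos).mpr (by nlinarith)
      have h3 := h h2
      have h4 : Real.sqrt w ≤ s := (hkey s hs).mpr (by nlinarith [min_le_left s d_max])
      linarith
    · intro hlt hvle
      by_contra hcon
      push_neg at hcon
      have h4 : Real.sqrt w ≤ m := le_min hcon hvle
      have h5 : w ≤ m ^ 2 := (hkey m hmpos).mp h4
      have hlt2 := (lt_div_iff₀ hrr).mp hlt
      nlinarith
  rw [hset]
  have hmeas : MeasurableSet {v : ℝ | Real.cos v < u} :=
    measurableSet_lt Real.continuous_cos.measurable measurable_const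
  rw [Measure.smul_apply, Measure.restrict_apply hmeas, smul_eq_mul]
  have hsd : {v : ℝ | Real.cos v < u} ∩ Icc (-π) π =
      Icc (-π) π \ {v | v ∈ Icc (-π) π ∧ u ≤ Real.cos v} := by
    ext v
    simp only [mem_inter_iff, mem_setOf_eq, mem_diff, not_and, not_le]
    constructor
    · rintro ⟨h1, h2⟩; exact ⟨h2, fun _ => h1⟩
    · rintro ⟨h1, h2⟩; exact ⟨h2 h1, h1⟩
  have hCsub : {v | v ∈ Icc (-π) π ∧ u ≤ Real.cos v} ⊆ Icc (-π) π := fun v hv => hv.1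
  have hCmeas : MeasurableSet {v : ℝ | v ∈ Icc (-π) π ∧ u ≤ Real.cos v} := by
    have : {v : ℝ | v ∈ Icc (-π) π ∧ u ≤ Real.cos v} =
        Icc (-π) π ∩ {v | u ≤ Real.cos v} := rfl
    rw [this]
    exact measurableSet_Icc.inter (measurableSet_le measurable_const Real.continuous_cos.measurable)
  have hCfin : volume {v : ℝ | v ∈ Icc (-π) π ∧ u ≤ Real.cos v} ≠ ⊤ := by
    rw [cos_set_vol hum1]; exact ENNReal.ofReal_ne_top
  have harz : 0 ≤ Real.arccos u := Real.arccos_nonneg u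
  have harp : Real.arccos u ≤ π := Real.arccos_le_pi u
  rw [hsd, measure_diff hCsub hCmeas.nullMeasurableSet hCfin, cos_set_vol hum1,
    Real.volume_Icc]
  have e1 : ENNReal.ofReal (π - -π) = ENNReal.ofReal (2 * π) := by congr 1; ring
  rw [e1, ← ENNReal.ofReal_sub _ (by nlinarith : (0:ℝ) ≤ 2 * Real.arccos u),
    ← ENNReal.ofReal_inv_of_pos (by positivity : (0:ℝ) < 2 * π),
    ← ENNReal.ofReal_mul (by positivity)]
  congr 1
  have hpi : π ≠ 0 := Real.pi_ne_zero
  field_simp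

lemma map_Dc {Ω : Type*} [MeasurableSpace Ω] (P : Measure Ω) [IsProbabilityMeasure P]
    {lam_c : ℝ} (hlam : 0 < lam_c) (D_c : Ω → ℝ) (hDcmeas : Measurable D_c)
    (hDcdist : ∀ x, 0 ≤ x →
      P {ω | D_c ω ≤ x} = ENNReal.ofReal (1 - Real.exp (-(lam_c * π * x ^ 2)))) :
    P.map D_c = volume.withDensity
      (fun x => ENNReal.ofReal (2 * π * lam_c * x * Real.exp (-(π * lam_c * x ^ 2)))) := by
  haveI : IsProbabilityMeasure (P.map D_c) := Measure.isProbabilityMeasure_map hDcmeas.aemeasurable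
  refine Measure.ext_of_Iic _ _ (fun a => ?_)
  rw [Measure.map_apply hDcmeas measurableSet_Iic, withDensity_apply _ measurableSet_Iic]
  have hzero : ∀ b : ℝ, b ≤ 0 →
      ∫⁻ x in Iic b, ENNReal.ofReal (2 * π * lam_c * x * Real.exp (-(π * lam_c * x ^ 2))) = 0 := by
    intro b hb
    rw [setLIntegral_congr_fun measurableSet_Iic (fun x hx => ?_), lintegral_zero]
    have hx0 : 2 * π * lam_c * x ≤ 0 := by
      have hx : x ≤ 0 := le_trans hx hb
      calc 2 * π * lam_c * x ≤ 2 * π * lam_c * 0 :=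
            mul_le_mul_of_nonneg_left hx (by positivity)
        _ = 0 := by ring
    exact ENNReal.ofReal_eq_zero.mpr
      (mul_nonpos_of_nonpos_of_nonneg hx0 (Real.exp_nonneg _))
  rcases le_or_gt 0 a with ha | ha
  · have : D_c ⁻¹' Iic a = {ω | D_c ω ≤ a} := rfl
    rw [this, hDcdist a ha]
    rw [show Iic a = Iic 0 ∪ Ioc 0 a from (Iic_union_Ioc_eq_Iic ha).symm,
      lintegral_union measurableSet_Ioc (Iic_disjoint_Ioc le_rfl), hzero 0 le_rfl, zero_add]
    have hint : IntegrableOn (fun x => 2 * π * lam_c * x * Real.exp (-(π * lam_c * x ^ 2)))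
        (Ioc 0 a) volume := by
      apply Continuous.integrableOn_Ioc
      continuity
    have hnn : 0 ≤ᵐ[volume.restrict (Ioc 0 a)]
        (fun x => 2 * π * lam_c * x * Real.exp (-(π * lam_c * x ^ 2))) := by
      refine ae_restrict_of_forall_mem measurableSet_Ioc (fun x hx => ?_)
      have := hx.1
      positivity
    rw [← ofReal_integral_eq_lintegral_ofReal hint hnn, gauss_ftc hlam ha]
    congr 1
    simp only [ne_eq, OfNat.ofNat_ne_zero, not_false_eq_true, zero_pow, mul_zero, neg_zero,
      Real.exp_zero]
    ring_nf
  · have h1 : P (D_c ⁻¹' Iic a) = 0 := by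
      refine le_antisymm ?_ zero_le
      have hsub : D_c ⁻¹' Iic a ⊆ {ω | D_c ω ≤ 0} := fun ω hω => le_trans hω ha.le
      refine le_trans (measure_mono hsub) ?_
      rw [hDcdist 0 le_rfl]
      simp
    rw [h1, hzero a ha.le]

set_option maxHeartbeats 2000000 in
/-- The association probability that a typical user associates with the nearest
cloud server: every visible satellite is farther than Q_s^{−α/2} D_c^{α/2}, and this
probability equals the stated sum of three integrals. -/
theorem stmt13 {Ω : Type*} [MeasurableSpace Ω] (P : Measure Ω) [IsProbabilityMeasure P]
    (r_e r_s a_s d_max : ℝ) (hre : 0 < r_e) (hrs : r_e < r_s)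
    (has : a_s = r_s - r_e) (hdmax : d_max = Real.sqrt (r_s ^ 2 - r_e ^ 2))
    (N_i : ℕ) (hNi : 0 < N_i) (lam_c α Q_s : ℝ) (hlam : 0 < lam_c) (hα : 0 < α)
    (hQs : 0 < Q_s)
    (Θ : Fin N_i → Ω → ℝ) (hΘmeas : ∀ k, Measurable (Θ k))
    (hΘindep : iIndepFun Θ P)
    (hΘunif : ∀ k, P.map (Θ k) = (ENNReal.ofReal (2 * π))⁻¹ • volume.restrict (Icc (-π) π))
    (D : Fin N_i → Ω → ℝ)
    (hD : ∀ k ω, D k ω = Real.sqrt (r_e ^ 2 + r_s ^ 2 - 2 * r_e * r_s * Real.cos (Θ k ω)))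
    (D_c : Ω → ℝ) (hDcmeas : Measurable D_c)
    (hDcdist : ∀ x, 0 ≤ x →
      P {ω | D_c ω ≤ x} = ENNReal.ofReal (1 - Real.exp (-(lam_c * π * x ^ 2))))
    (hindep : IndepFun (fun ω k => Θ k ω) D_c P) :
    P {ω | ∀ k, D k ω ≤ d_max → Q_s ^ (-(α / 2)) * D_c ω ^ (α / 2) < D k ω} =
      ENNReal.ofReal
        ((∫ x in Ioc (0:ℝ) ((a_s * Q_s ^ (α / 2)) ^ (2 / α)),
            2 * π * lam_c * x * Real.exp (-(π * lam_c * x ^ 2))) +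
          2 * π * lam_c *
            (∫ x in Ioc ((a_s * Q_s ^ (α / 2)) ^ (2 / α)) ((d_max * Q_s ^ (α / 2)) ^ (2 / α)),
              (1 - (1 / π) *
                  Real.arccos (1 - (Q_s ^ (-α) * x ^ α - a_s ^ 2) / (2 * r_e * r_s))) ^ N_i *
                (x * Real.exp (-(π * lam_c * x ^ 2)))) +
          2 * π * lam_c *
            (∫ x in Ioi ((d_max * Q_s ^ (α / 2)) ^ (2 / α)),
              (1 - (1 / π) * Real.arccos (r_e / r_s)) ^ N_i *
                (x * Real.exp (-(π * lam_c * x ^ 2))))) := by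
  -- basic positivity facts
  have hrs0 : 0 < r_s := hre.trans hrs
  have haspos : 0 < a_s := by rw [has]; linarith
  have hd2 : d_max ^ 2 = r_s ^ 2 - r_e ^ 2 := by rw [hdmax, Real.sq_sqrt (by nlinarith)]
  have hdpos : 0 < d_max := by
    rw [hdmax]; exact Real.sqrt_pos.mpr (by nlinarith)
  have hasd : a_s ≤ d_max := by nlinarith
  have hrr : (0:ℝ) < 2 * r_e * r_s := by positivity
  have hQα : 0 < Q_s ^ (α / 2) := Real.rpow_pos_of_pos hQs _
  set t1 : ℝ := (a_s * Q_s ^ (α / 2)) ^ (2 / α) with ht1def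
  set t2 : ℝ := (d_max * Q_s ^ (α / 2)) ^ (2 / α) with ht2def
  have ht1pos : 0 < t1 := Real.rpow_pos_of_pos (by positivity) _
  have ht2pos : 0 < t2 := Real.rpow_pos_of_pos (by positivity) _
  have ht12 : t1 ≤ t2 :=
    Real.rpow_le_rpow (by positivity) (mul_le_mul_of_nonneg_right hasd hQα.le) (by positivity)
  -- properties of the threshold function τ y = Q_s^(-(α/2)) * y^(α/2)
  have hτpos : ∀ y : ℝ, 0 < y → 0 < Q_s ^ (-(α / 2)) * y ^ (α / 2) :=
    fun y hy => mul_pos (Real.rpow_pos_of_pos hQs _) (Real.rpow_pos_of_pos hy _)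
  have hτeval : ∀ d : ℝ, 0 < d →
      Q_s ^ (-(α / 2)) * ((d * Q_s ^ (α / 2)) ^ (2 / α)) ^ (α / 2) = d := by
    intro d hd
    rw [← Real.rpow_mul (by positivity : (0:ℝ) ≤ d * Q_s ^ (α / 2)),
      show (2 / α) * (α / 2) = 1 by field_simp, Real.rpow_one]
    have h1 : Q_s ^ (-(α / 2)) * Q_s ^ (α / 2) = 1 := by
      rw [← Real.rpow_add hQs]; norm_num
    calc Q_s ^ (-(α / 2)) * (d * Q_s ^ (α / 2))
        = (Q_s ^ (-(α / 2)) * Q_s ^ (α / 2)) * d := by ring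
      _ = d := by rw [h1, one_mul]
  have hτle : ∀ d y : ℝ, 0 < d → 0 < y → y ≤ (d * Q_s ^ (α / 2)) ^ (2 / α) →
      Q_s ^ (-(α / 2)) * y ^ (α / 2) ≤ d := by
    intro d y hd hy hle
    have h1 : y ^ (α / 2) ≤ ((d * Q_s ^ (α / 2)) ^ (2 / α)) ^ (α / 2) :=
      Real.rpow_le_rpow hy.le hle (by positivity)
    calc Q_s ^ (-(α / 2)) * y ^ (α / 2)
        ≤ Q_s ^ (-(α / 2)) * ((d * Q_s ^ (α / 2)) ^ (2 / α)) ^ (α / 2) :=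
          mul_le_mul_of_nonneg_left h1 (Real.rpow_nonneg hQs.le _)
      _ = d := hτeval d hd
  have hτgt : ∀ d y : ℝ, 0 < d → (d * Q_s ^ (α / 2)) ^ (2 / α) < y →
      d < Q_s ^ (-(α / 2)) * y ^ (α / 2) := by
    intro d y hd hlt
    have h1 : ((d * Q_s ^ (α / 2)) ^ (2 / α)) ^ (α / 2) < y ^ (α / 2) :=
      Real.rpow_lt_rpow (by positivity) hlt (by positivity)
    calc d = Q_s ^ (-(α / 2)) * ((d * Q_s ^ (α / 2)) ^ (2 / α)) ^ (α / 2) := (hτeval d hd).symm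
      _ < Q_s ^ (-(α / 2)) * y ^ (α / 2) :=
          mul_lt_mul_of_pos_left h1 (Real.rpow_pos_of_pos hQs _)
  have hτsq : ∀ y : ℝ, 0 < y →
      (Q_s ^ (-(α / 2)) * y ^ (α / 2)) ^ 2 = Q_s ^ (-α) * y ^ α := by
    intro y hy
    rw [mul_pow, ← Real.rpow_natCast (Q_s ^ (-(α / 2))) 2,
      ← Real.rpow_natCast (y ^ (α / 2)) 2, ← Real.rpow_mul hQs.le, ← Real.rpow_mul hy.le]
    norm_num
  -- the event as a preimage
  set dfun : ℝ → ℝ := fun v => Real.sqrt (r_e ^ 2 + r_s ^ 2 - 2 * r_e * r_s * Real.cos v)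
    with hdfundef
  have hdcont : Continuous dfun := by
    apply Real.continuous_sqrt.comp
    continuity
  set S : Set (ℝ × (Fin N_i → ℝ)) :=
    {z | ∀ k, dfun (z.2 k) ≤ d_max → Q_s ^ (-(α / 2)) * z.1 ^ (α / 2) < dfun (z.2 k)}
    with hSdef
  have hτcont : Continuous (fun y : ℝ => Q_s ^ (-(α / 2)) * y ^ (α / 2)) :=
    continuous_const.mul (Real.continuous_rpow_const (by positivity))
  have hSmeas : MeasurableSet S := by
    have : S = ⋂ k, ({z : ℝ × (Fin N_i → ℝ) | d_max < dfun (z.2 k)} ∪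
        {z : ℝ × (Fin N_i → ℝ) | Q_s ^ (-(α / 2)) * z.1 ^ (α / 2) < dfun (z.2 k)}) := by
      ext z
      simp only [hSdef, mem_setOf_eq, mem_iInter, mem_union]
      constructor
      · intro h k
        by_cases hc : dfun (z.2 k) ≤ d_max
        · exact Or.inr (h k hc)
        · exact Or.inl (not_le.mp hc)
      · intro h k hle
        rcases h k with h' | h'
        · exact absurd hle (not_le.mpr h')
        · exact h'
    rw [this]
    refine MeasurableSet.iInter fun k => MeasurableSet.union ?_ ?_
    · exact measurableSet_lt measurable_const
        ((hdcont.measurable).comp ((measurable_pi_apply k).comp measurable_snd))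
    · exact measurableSet_lt (hτcont.measurable.comp measurable_fst)
        ((hdcont.measurable).comp ((measurable_pi_apply k).comp measurable_snd))
  have hΘvec : Measurable (fun ω => fun k => Θ k ω) := measurable_pi_lambda _ hΘmeas
  haveI : IsProbabilityMeasure (P.map (fun ω => fun k => Θ k ω)) :=
    Measure.isProbabilityMeasure_map hΘvec.aemeasurable
  have hEvent : {ω | ∀ k, D k ω ≤ d_max → Q_s ^ (-(α / 2)) * D_c ω ^ (α / 2) < D k ω}
      = (fun ω => (D_c ω, fun k => Θ k ω)) ⁻¹' S := by
    ext ω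
    simp only [hSdef, mem_setOf_eq, mem_preimage, hdfundef, hD]
  have hpairmeas : Measurable (fun ω => (D_c ω, fun k => Θ k ω)) := hDcmeas.prodMk hΘvec
  have hpairlaw : P.map (fun ω => (D_c ω, fun k => Θ k ω)) =
      (P.map D_c).prod (P.map (fun ω => fun k => Θ k ω)) :=
    (indepFun_iff_map_prod_eq_prod_map_map hDcmeas.aemeasurable hΘvec.aemeasurable).mp hindep.symm
  -- the conditional probability function
  set F : ℝ → ENNReal := fun y => (P.map (fun ω => fun k => Θ k ω)) (Prod.mk y ⁻¹' S) with hFdef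
  have hFmeas : Measurable F := measurable_measure_prodMk_left hSmeas
  have hstep1 : P {ω | ∀ k, D k ω ≤ d_max → Q_s ^ (-(α / 2)) * D_c ω ^ (α / 2) < D k ω}
      = ∫⁻ y, F y ∂(P.map D_c) := by
    rw [hEvent, ← Measure.map_apply hpairmeas hSmeas, hpairlaw, Measure.prod_apply hSmeas]
  -- the value of F on positive reals
  have hFval : ∀ y : ℝ, 0 < y → F y =
      (ENNReal.ofReal (1 - Real.arccos ((r_e ^ 2 + r_s ^ 2 -
        (min (Q_s ^ (-(α / 2)) * y ^ (α / 2)) d_max) ^ 2) / (2 * r_e * r_s)) / π)) ^ N_i := by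
    intro y hy
    set B : Set ℝ := {v | dfun v ≤ d_max → Q_s ^ (-(α / 2)) * y ^ (α / 2) < dfun v} with hBdef
    have hBmeas : MeasurableSet B := by
      have : B = {v | d_max < dfun v} ∪ {v | Q_s ^ (-(α / 2)) * y ^ (α / 2) < dfun v} := by
        ext v
        simp only [hBdef, mem_setOf_eq, mem_union]
        constructor
        · intro h
          by_cases hc : dfun v ≤ d_max
          · exact Or.inr (h hc)
          · exact Or.inl (not_le.mp hc)
        · intro h hle
          rcases h with h' | h'
          · exact absurd hle (not_le.mpr h')
          · exact h'
      rw [this]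
      exact (measurableSet_lt measurable_const hdcont.measurable).union
        (measurableSet_lt measurable_const hdcont.measurable)
    have hsec : Prod.mk y ⁻¹' S = ⋂ k, (fun θv : Fin N_i → ℝ => θv k) ⁻¹' B := by
      ext θv
      simp only [hSdef, hBdef, mem_preimage, mem_setOf_eq, mem_iInter]
    have hsecmeas : ∀ k : Fin N_i,
        MeasurableSet ((fun θv : Fin N_i → ℝ => θv k) ⁻¹' B) :=
      fun k => (measurable_pi_apply k) hBmeas
    simp only [hFdef]
    rw [hsec, Measure.map_apply hΘvec (MeasurableSet.iInter hsecmeas)]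
    have hpre : (fun ω => fun k => Θ k ω) ⁻¹' (⋂ k, (fun θv : Fin N_i → ℝ => θv k) ⁻¹' B)
        = ⋂ k, Θ k ⁻¹' B := by
      ext ω
      simp only [mem_preimage, mem_iInter]
    rw [hpre, hΘindep.meas_iInter (fun k => ⟨B, hBmeas, rfl⟩)]
    have hone : ∀ k : Fin N_i, P (Θ k ⁻¹' B) =
        ENNReal.ofReal (1 - Real.arccos ((r_e ^ 2 + r_s ^ 2 -
          (min (Q_s ^ (-(α / 2)) * y ^ (α / 2)) d_max) ^ 2) / (2 * r_e * r_s)) / π) := by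
      intro k
      rw [← Measure.map_apply (hΘmeas k) hBmeas, hΘunif k]
      exact unif_B hre hrs hdmax (hτpos y hy)
    rw [Finset.prod_congr rfl (fun k _ => hone k), Finset.prod_const, Finset.card_univ,
      Fintype.card_fin]
  -- the density of D_c
  have hρmeas : Measurable (fun x : ℝ =>
      ENNReal.ofReal (2 * π * lam_c * x * Real.exp (-(π * lam_c * x ^ 2)))) := by
    exact ENNReal.measurable_ofReal.comp ((continuous_const.mul continuous_id).mul
      (Real.continuous_exp.comp ((continuous_const.mul (continuous_pow 2)).neg))).measurable
  have hgint : Integrable (fun x : ℝ => 2 * π * lam_c * x * Real.exp (-(π * lam_c * x ^ 2)))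
      volume := by
    have h0 := (integrable_mul_exp_neg_mul_sq (by positivity : (0:ℝ) < π * lam_c)).const_mul
      (2 * π * lam_c)
    have e : ∀ x : ℝ, -(π * lam_c) * x ^ 2 = -(π * lam_c * x ^ 2) := fun x => by ring
    simp only [e] at h0
    convert h0 using 1
    funext x
    ring
  have hp_nn : ∀ u : ℝ, 0 ≤ 1 - 1 / π * Real.arccos u := by
    intro u
    have h1 : 1 / π * Real.arccos u ≤ 1 / π * π :=
      mul_le_mul_of_nonneg_left (Real.arccos_le_pi u) (by positivity)
    rw [one_div_mul_cancel Real.pi_ne_zero] at h1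
    linarith
  -- rewrite the probability as a Lebesgue integral against the density
  rw [hstep1, map_Dc P hlam D_c hDcmeas hDcdist,
    lintegral_withDensity_eq_lintegral_mul volume hρmeas hFmeas]
  simp only [Pi.mul_apply]
  rw [← lintegral_add_compl (fun y => ENNReal.ofReal
      (2 * π * lam_c * y * Real.exp (-(π * lam_c * y ^ 2))) * F y)
      (measurableSet_Iic (a := (0:ℝ))), compl_Iic]
  -- the part on Iic 0 vanishes
  have hIic0 : ∫⁻ y in Iic (0:ℝ),
      ENNReal.ofReal (2 * π * lam_c * y * Real.exp (-(π * lam_c * y ^ 2))) * F y = 0 := by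
    rw [setLIntegral_congr_fun measurableSet_Iic (fun y hy => ?_), lintegral_zero]
    have hy0 : 2 * π * lam_c * y ≤ 0 := by
      calc 2 * π * lam_c * y ≤ 2 * π * lam_c * 0 :=
            mul_le_mul_of_nonneg_left hy (by positivity)
        _ = 0 := by ring
    rw [ENNReal.ofReal_eq_zero.mpr
      (mul_nonpos_of_nonpos_of_nonneg hy0 (Real.exp_nonneg _)), zero_mul]
  -- split the positive axis
  have hIoisplit : Ioi (0:ℝ) = Ioc 0 t1 ∪ (Ioc t1 t2 ∪ Ioi t2) := by
    rw [Ioc_union_Ioi_eq_Ioi ht12, Ioc_union_Ioi_eq_Ioi ht1pos.le]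
  have hdisj2 : Disjoint (Ioc t1 t2) (Ioi t2) := by
    rw [Set.disjoint_left]
    intro x hx hx2
    exact absurd hx.2 (not_le.mpr hx2)
  have hdisj1 : Disjoint (Ioc (0:ℝ) t1) (Ioc t1 t2 ∪ Ioi t2) := by
    rw [Ioc_union_Ioi_eq_Ioi ht12, Set.disjoint_left]
    intro x hx hx2
    exact absurd hx.2 (not_le.mpr hx2)
  rw [hIic0, zero_add, hIoisplit,
    lintegral_union (measurableSet_Ioc.union measurableSet_Ioi) hdisj1,
    lintegral_union measurableSet_Ioi hdisj2]
  -- region 1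
  have hreg1 : ∫⁻ y in Ioc (0:ℝ) t1,
      ENNReal.ofReal (2 * π * lam_c * y * Real.exp (-(π * lam_c * y ^ 2))) * F y =
      ENNReal.ofReal (∫ x in Ioc (0:ℝ) t1,
        2 * π * lam_c * x * Real.exp (-(π * lam_c * x ^ 2))) := by
    rw [setLIntegral_congr_fun measurableSet_Ioc (fun y hy => ?_),
      ← ofReal_integral_eq_lintegral_ofReal hgint.integrableOn
        (ae_restrict_of_forall_mem measurableSet_Ioc (fun x hx =>
          mul_nonneg (mul_nonneg (by positivity) hx.1.le) (Real.exp_nonneg _)))]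
    have hy0 : 0 < y := hy.1
    rw [hFval y hy0]
    have hτa : Q_s ^ (-(α / 2)) * y ^ (α / 2) ≤ a_s := hτle a_s y haspos hy0 hy.2
    rw [min_eq_left (hτa.trans hasd)]
    have hu1 : (1:ℝ) ≤ (r_e ^ 2 + r_s ^ 2 -
        (Q_s ^ (-(α / 2)) * y ^ (α / 2)) ^ 2) / (2 * r_e * r_s) := by
      rw [le_div_iff₀ hrr]
      have hτ2 : (Q_s ^ (-(α / 2)) * y ^ (α / 2)) ^ 2 ≤ a_s ^ 2 :=
        pow_le_pow_left₀ (hτpos y hy0).le hτa 2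
      nlinarith
    rw [Real.arccos_eq_zero.mpr hu1]
    norm_num
  -- region 2
  have ha2 : a_s ^ 2 = r_e ^ 2 + r_s ^ 2 - 2 * r_e * r_s := by rw [has]; ring
  have hreg2 : ∫⁻ y in Ioc t1 t2,
      ENNReal.ofReal (2 * π * lam_c * y * Real.exp (-(π * lam_c * y ^ 2))) * F y =
      ENNReal.ofReal (2 * π * lam_c * ∫ x in Ioc t1 t2,
        (1 - 1 / π * Real.arccos (1 - (Q_s ^ (-α) * x ^ α - a_s ^ 2) / (2 * r_e * r_s))) ^ N_i *
          (x * Real.exp (-(π * lam_c * x ^ 2)))) := by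
    have hxa : Continuous fun x : ℝ => x ^ α := Real.continuous_rpow_const hα.le
    have hpcont : Continuous (fun x : ℝ =>
        1 - 1 / π * Real.arccos (1 - (Q_s ^ (-α) * x ^ α - a_s ^ 2) / (2 * r_e * r_s))) := by
      apply continuous_const.sub
      apply continuous_const.mul
      apply Real.continuous_arccos.comp
      exact continuous_const.sub (((continuous_const.mul hxa).sub continuous_const).div_const _)
    have hintg : IntegrableOn (fun x : ℝ =>
        (1 - 1 / π * Real.arccos (1 - (Q_s ^ (-α) * x ^ α - a_s ^ 2) / (2 * r_e * r_s))) ^ N_i *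
          (2 * π * lam_c * x * Real.exp (-(π * lam_c * x ^ 2)))) (Ioc t1 t2) volume := by
      apply Continuous.integrableOn_Ioc
      exact (hpcont.pow N_i).mul ((continuous_const.mul continuous_id).mul
        (Real.continuous_exp.comp ((continuous_const.mul (continuous_pow 2)).neg)))
    rw [setLIntegral_congr_fun measurableSet_Ioc (fun y hy => ?_),
      ← ofReal_integral_eq_lintegral_ofReal hintg
        (ae_restrict_of_forall_mem measurableSet_Ioc (fun x hx => mul_nonneg
          (pow_nonneg (hp_nn _) _)
          (mul_nonneg (mul_nonneg (by positivity) (ht1pos.trans hx.1).le)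
            (Real.exp_nonneg _))))]
    · congr 1
      rw [← integral_const_mul]
      apply setIntegral_congr_fun measurableSet_Ioc
      intro x hx
      ring
    · have hy0 : 0 < y := ht1pos.trans hy.1
      rw [hFval y hy0]
      have hτd : Q_s ^ (-(α / 2)) * y ^ (α / 2) ≤ d_max := hτle d_max y hdpos hy0 hy.2
      rw [min_eq_left hτd, hτsq y hy0]
      have harg : (r_e ^ 2 + r_s ^ 2 - Q_s ^ (-α) * y ^ α) / (2 * r_e * r_s) =
          1 - (Q_s ^ (-α) * y ^ α - a_s ^ 2) / (2 * r_e * r_s) := by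
        rw [ha2]
        field_simp
        ring
      rw [harg]
      have hpnn := hp_nn (1 - (Q_s ^ (-α) * y ^ α - a_s ^ 2) / (2 * r_e * r_s))
      rw [show (1:ℝ) - Real.arccos (1 - (Q_s ^ (-α) * y ^ α - a_s ^ 2) / (2 * r_e * r_s)) / π =
          1 - 1 / π * Real.arccos (1 - (Q_s ^ (-α) * y ^ α - a_s ^ 2) / (2 * r_e * r_s)) by ring,
        ← ENNReal.ofReal_pow hpnn,
        ← ENNReal.ofReal_mul (mul_nonneg (mul_nonneg (by positivity) hy0.le)
          (Real.exp_nonneg _))]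
      congr 1
      ring
  -- region 3
  have hreg3 : ∫⁻ y in Ioi t2,
      ENNReal.ofReal (2 * π * lam_c * y * Real.exp (-(π * lam_c * y ^ 2))) * F y =
      ENNReal.ofReal (2 * π * lam_c * ∫ x in Ioi t2,
        (1 - 1 / π * Real.arccos (r_e / r_s)) ^ N_i *
          (x * Real.exp (-(π * lam_c * x ^ 2)))) := by
    have hintg : IntegrableOn (fun x : ℝ =>
        (1 - 1 / π * Real.arccos (r_e / r_s)) ^ N_i *
          (2 * π * lam_c * x * Real.exp (-(π * lam_c * x ^ 2)))) (Ioi t2) volume :=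
      (hgint.const_mul _).integrableOn
    rw [setLIntegral_congr_fun measurableSet_Ioi (fun y hy => ?_),
      ← ofReal_integral_eq_lintegral_ofReal hintg
        (ae_restrict_of_forall_mem measurableSet_Ioi (fun x hx => mul_nonneg
          (pow_nonneg (hp_nn _) _)
          (mul_nonneg (mul_nonneg (by positivity) (ht2pos.trans hx).le)
            (Real.exp_nonneg _))))]
    · congr 1
      rw [← integral_const_mul]
      apply setIntegral_congr_fun measurableSet_Ioi
      intro x hx
      ring
    · have hy0 : 0 < y := ht2pos.trans hy
      rw [hFval y hy0]
      have hτd : d_max < Q_s ^ (-(α / 2)) * y ^ (α / 2) := hτgt d_max y hdpos hy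
      rw [min_eq_right hτd.le]
      have harg : (r_e ^ 2 + r_s ^ 2 - d_max ^ 2) / (2 * r_e * r_s) = r_e / r_s := by
        rw [hd2, div_eq_div_iff hrr.ne' hrs0.ne']
        ring
      rw [harg]
      have hpnn := hp_nn (r_e / r_s)
      rw [show (1:ℝ) - Real.arccos (r_e / r_s) / π =
          1 - 1 / π * Real.arccos (r_e / r_s) by ring,
        ← ENNReal.ofReal_pow hpnn,
        ← ENNReal.ofReal_mul (mul_nonneg (mul_nonneg (by positivity) hy0.le)
          (Real.exp_nonneg _))]
      congr 1
      ring
  rw [hreg1, hreg2, hreg3]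
  -- combine
  have hAnn : 0 ≤ ∫ x in Ioc (0:ℝ) t1, 2 * π * lam_c * x * Real.exp (-(π * lam_c * x ^ 2)) :=
    setIntegral_nonneg measurableSet_Ioc (fun x hx =>
      mul_nonneg (mul_nonneg (by positivity) hx.1.le) (Real.exp_nonneg _))
  have hBnn : (0:ℝ) ≤ 2 * π * lam_c * ∫ x in Ioc t1 t2,
      (1 - 1 / π * Real.arccos (1 - (Q_s ^ (-α) * x ^ α - a_s ^ 2) / (2 * r_e * r_s))) ^ N_i *
        (x * Real.exp (-(π * lam_c * x ^ 2))) :=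
    mul_nonneg (by positivity) (setIntegral_nonneg measurableSet_Ioc (fun x hx =>
      mul_nonneg (pow_nonneg (hp_nn _) _)
        (mul_nonneg (ht1pos.trans hx.1).le (Real.exp_nonneg _))))
  have hCnn : (0:ℝ) ≤ 2 * π * lam_c * ∫ x in Ioi t2,
      (1 - 1 / π * Real.arccos (r_e / r_s)) ^ N_i *
        (x * Real.exp (-(π * lam_c * x ^ 2))) :=
    mul_nonneg (by positivity) (setIntegral_nonneg measurableSet_Ioi (fun x hx =>
      mul_nonneg (pow_nonneg (hp_nn _) _)
        (mul_nonneg (ht2pos.trans hx).le (Real.exp_nonneg _))))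
  rw [← ENNReal.ofReal_add hBnn hCnn, ← ENNReal.ofReal_add hAnn (add_nonneg hBnn hCnn)]
  congr 1
  ring
end
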